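/- Let {x_n}, {y_n}, {z_n} be complex sequences indexed by nonzero integers satisfying the trilinear system, parity, summability ∑_{n≥1}(|x_n|+|y_n|+|z_n|) < ∞, with |x_1| = 1, y_1 ≠ 0, z_1 ≠ 0. Then |x_n| = |y_n| = |z_n| > 0 for all n ≥ 1. (This leads to a contradiction with summability, so this case is impossible; but the equality of moduli itself is the statement to prove.) -/

import Mathlib

open Complex ComplexConjugate

theorem stmt_13 (x y z : ℤ → ℂ)
    (hsys : ∀ n1 n2 : ℤ, n1 ≠ 0 → n2 ≠ 0 → n1 + n2 ≠ 0 →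
      x n1 * y n2 - x (n1 + n2) * z n2 + y (n1 + n2) * z (-n1) = 0)
    (hpar : ∀ n : ℤ, x (-n) = (starRingEnd ℂ) (x n) ∧ y (-n) = (starRingEnd ℂ) (y n) ∧
      z (-n) = (starRingEnd ℂ) (z n))
    (hsum : Summable (fun n : ℕ => ‖x (n + 1)‖ + ‖y (n + 1)‖ + ‖z (n + 1)‖))
    (hx1 : ‖x 1‖ = 1) (hy1 : y 1 ≠ 0) (hz1 : z 1 ≠ 0) :
    ∀ n : ℤ, 1 ≤ n →
      ‖x n‖ = ‖y n‖ ∧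
      ‖y n‖ = ‖z n‖ ∧
      0 < ‖x n‖ := by
  have conj_ne : ∀ w : ℂ, w ≠ 0 → conj w ≠ 0 := by
    intro w hw h
    exact hw (by simpa using congrArg conj h)
  have hx1ne : x 1 ≠ 0 := by
    intro h; rw [h] at hx1; simp at hx1
  have hA : ∀ n : ℤ, 1 ≤ n →
      x n * y 1 - x (n+1) * z 1 + y (n+1) * conj (z n) = 0 := by
    intro n hn
    have h := hsys n 1 (by omega) (by omega) (by omega)
    rwa [(hpar n).2.2] at h
  have hB : ∀ n : ℤ, 1 ≤ n →
      x 1 * y n - x (n+1) * z n + y (n+1) * conj (z 1) = 0 := by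
    intro n hn
    have h := hsys 1 n (by omega) (by omega) (by omega)
    rw [show (1:ℤ) + n = n + 1 by ring] at h
    rwa [(hpar 1).2.2] at h
  have hC : ∀ n : ℤ, 1 ≤ n →
      x (n+1) * conj (y n) - x 1 * conj (z n) + y 1 * conj (z (n+1)) = 0 := by
    intro n hn
    have h := hsys (n+1) (-n) (by omega) (by omega) (by omega)
    rw [show n + 1 + -n = (1:ℤ) by ring] at h
    rwa [(hpar n).2.1, (hpar n).2.2, (hpar (n+1)).2.2] at h
  have hD : ∀ n : ℤ, 1 ≤ n →
      conj (x n) * y (n+1) - x 1 * z (n+1) + y 1 * z n = 0 := by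
    intro n hn
    have h := hsys (-n) (n+1) (by omega) (by omega) (by omega)
    rw [show -n + (n+1) = (1:ℤ) by ring, neg_neg] at h
    rwa [(hpar n).1] at h
  have hE : ∀ n : ℤ, 1 ≤ n →
      conj (x 1) * y (n+1) - x n * z (n+1) + y n * z 1 = 0 := by
    intro n hn
    have h := hsys (-1) (n+1) (by omega) (by omega) (by omega)
    rw [show (-1:ℤ) + (n+1) = n by ring, neg_neg] at h
    rwa [(hpar 1).1] at h
  have hF : ∀ n : ℤ, 1 ≤ n →
      x (n+1) * conj (y 1) - x n * conj (z 1) + y n * conj (z (n+1)) = 0 := by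
    intro n hn
    have h := hsys (n+1) (-1) (by omega) (by omega) (by omega)
    rw [show n + 1 + -1 = n by ring] at h
    rwa [(hpar 1).2.1, (hpar 1).2.2, (hpar (n+1)).2.2] at h
  have hCc : ∀ n : ℤ, 1 ≤ n →
      conj (x (n+1)) * y n - conj (x 1) * z n + conj (y 1) * z (n+1) = 0 := by
    intro n hn
    have h := hsys (-(n+1)) n (by omega) (by omega) (by omega)
    rw [show -(n+1) + n = (-1:ℤ) by ring, neg_neg] at h
    rwa [(hpar (n+1)).1, (hpar 1).1, (hpar 1).2.1] at h
  have hFc : ∀ n : ℤ, 1 ≤ n →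
      conj (x (n+1)) * y 1 - conj (x n) * z 1 + conj (y n) * z (n+1) = 0 := by
    intro n hn
    have h := hsys (-(n+1)) 1 (by omega) (by omega) (by omega)
    rw [show -(n+1) + 1 = -n by ring, neg_neg] at h
    rwa [(hpar (n+1)).1, (hpar n).1, (hpar n).2.1] at h
  have hP : ∀ n : ℤ, 1 ≤ n →
      (x n * conj (x n) - x 1 * conj (x 1) - z n * conj (z n) + z 1 * conj (z 1)) * y (n+1) = 0 := by
    intro n hn
    linear_combination x n * hD n hn - x 1 * hE n hn - z n * hA n hn + z 1 * hB n hn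
  have hQ : ∀ n : ℤ, 1 ≤ n →
      (z n * conj (z n) - z 1 * conj (z 1) - y n * conj (y n) + y 1 * conj (y 1)) * x (n+1) = 0 := by
    intro n hn
    linear_combination conj (z 1) * hA n hn - conj (z n) * hB n hn - y n * hC n hn + y 1 * hF n hn
  have hS : ∀ n : ℤ, 1 ≤ n →
      (x n * conj (x n) - x 1 * conj (x 1) - y n * conj (y n) + y 1 * conj (y 1)) * z (n+1) = 0 := by
    intro n hn
    linear_combination conj (x 1) * hD n hn - conj (x n) * hE n hn + y 1 * hCc n hn - y n * hFc n hn
  have hPr : ∀ n : ℤ, 1 ≤ n → y (n+1) ≠ 0 →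
      normSq (x n) - normSq (z n) = normSq (x 1) - normSq (z 1) := by
    intro n hn hy
    rcases mul_eq_zero.mp (hP n hn) with h | h
    · rw [Complex.mul_conj, Complex.mul_conj, Complex.mul_conj, Complex.mul_conj] at h
      have h2 : (normSq (x n) - normSq (x 1) - normSq (z n) + normSq (z 1) : ℝ) = 0 := by
        exact_mod_cast h
      linarith
    · exact absurd h hy
  have hQr : ∀ n : ℤ, 1 ≤ n → x (n+1) ≠ 0 →
      normSq (z n) - normSq (y n) = normSq (z 1) - normSq (y 1) := by
    intro n hn hx
    rcases mul_eq_zero.mp (hQ n hn) with h | h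
    · rw [Complex.mul_conj, Complex.mul_conj, Complex.mul_conj, Complex.mul_conj] at h
      have h2 : (normSq (z n) - normSq (z 1) - normSq (y n) + normSq (y 1) : ℝ) = 0 := by
        exact_mod_cast h
      linarith
    · exact absurd h hx
  have hSr : ∀ n : ℤ, 1 ≤ n → z (n+1) ≠ 0 →
      normSq (x n) - normSq (y n) = normSq (x 1) - normSq (y 1) := by
    intro n hn hz
    rcases mul_eq_zero.mp (hS n hn) with h | h
    · rw [Complex.mul_conj, Complex.mul_conj, Complex.mul_conj, Complex.mul_conj] at h
      have h2 : (normSq (x n) - normSq (x 1) - normSq (y n) + normSq (y 1) : ℝ) = 0 := by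
        exact_mod_cast h
      linarith
    · exact absurd h hz
  have htwo : ∀ n : ℤ, 1 ≤ n → x n ≠ 0 → y n ≠ 0 → z n ≠ 0 →
      (x (n+1) ≠ 0 ∧ y (n+1) ≠ 0) ∨ (x (n+1) ≠ 0 ∧ z (n+1) ≠ 0) ∨ (y (n+1) ≠ 0 ∧ z (n+1) ≠ 0) := by
    intro n hn hxn hyn hzn
    by_cases hy : y (n+1) = 0
    · refine Or.inr (Or.inl ⟨?_, ?_⟩)
      · intro hx0
        exact (mul_ne_zero hx1ne hyn)
          (by linear_combination hB n hn - conj (z 1) * hy + z n * hx0)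
      · intro hz0
        exact (mul_ne_zero hyn hz1)
          (by linear_combination hE n hn - conj (x 1) * hy + x n * hz0)
    · by_cases hx : x (n+1) = 0
      · refine Or.inr (Or.inr ⟨hy, ?_⟩)
        intro hz0
        have hz0c : conj (z (n+1)) = 0 := by rw [hz0]; simp
        exact (mul_ne_zero hxn (conj_ne _ hz1))
          (by linear_combination -hF n hn + conj (y 1) * hx + y n * hz0c)
      · exact Or.inl ⟨hx, hy⟩
  have hdiffs : ∀ n : ℤ, 1 ≤ n → x n ≠ 0 → y n ≠ 0 → z n ≠ 0 →
      (normSq (x n) - normSq (z n) = normSq (x 1) - normSq (z 1)) ∧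
      (normSq (z n) - normSq (y n) = normSq (z 1) - normSq (y 1)) := by
    intro n hn hxn hyn hzn
    rcases htwo n hn hxn hyn hzn with ⟨hx, hy⟩ | ⟨hx, hz⟩ | ⟨hy, hz⟩
    · exact ⟨hPr n hn hy, hQr n hn hx⟩
    · have h1 := hQr n hn hx
      have h2 := hSr n hn hz
      exact ⟨by linarith, h1⟩
    · have h1 := hPr n hn hy
      have h2 := hSr n hn hz
      exact ⟨h1, by linarith⟩
  have hstep : ∀ n : ℤ, 1 ≤ n → x n ≠ 0 → y n ≠ 0 → z n ≠ 0 →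
      (x (n+1) ≠ 0 ∧ y (n+1) ≠ 0 ∧ z (n+1) ≠ 0) ∨
      (x (n+1+1) ≠ 0 ∧ y (n+1+1) ≠ 0 ∧ z (n+1+1) ≠ 0) := by
    intro n hn hxn hyn hzn
    have hm : (1:ℤ) ≤ n + 1 := by omega
    rcases htwo n hn hxn hyn hzn with ⟨hx, hy⟩ | ⟨hx, hz⟩ | ⟨hy, hz⟩
    · by_cases hz : z (n+1) = 0
      · right
        have hzc : conj (z (n+1)) = 0 := by rw [hz]; simp
        have hx2 : x (n+1+1) ≠ 0 := by
          intro hx0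
          exact (mul_ne_zero hx hy1)
            (by linear_combination hA (n+1) hm + z 1 * hx0 - y (n+1+1) * hzc)
        have hy2 : y (n+1+1) ≠ 0 := by
          intro hy0
          exact (mul_ne_zero hx1ne hy)
            (by linear_combination hB (n+1) hm + x (n+1+1) * hz - conj (z 1) * hy0)
        have hz2 : z (n+1+1) ≠ 0 := by
          intro hz0
          have hz0c : conj (z (n+1+1)) = 0 := by rw [hz0]; simp
          exact (mul_ne_zero hx2 (conj_ne _ hy))
            (by linear_combination hC (n+1) hm + x 1 * hzc - y 1 * hz0c)
        exact ⟨hx2, hy2, hz2⟩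
      · exact Or.inl ⟨hx, hy, hz⟩
    · by_cases hy : y (n+1) = 0
      · right
        have hyc : conj (y (n+1)) = 0 := by rw [hy]; simp
        have hz2 : z (n+1+1) ≠ 0 := by
          intro hz0
          have hz0c : conj (z (n+1+1)) = 0 := by rw [hz0]; simp
          exact (mul_ne_zero hx1ne (conj_ne _ hz))
            (by linear_combination -hC (n+1) hm + x (n+1+1) * hyc + y 1 * hz0c)
        have hx2 : x (n+1+1) ≠ 0 := by
          intro hx0
          exact (mul_ne_zero hx (conj_ne _ hz1))
            (by linear_combination -hF (n+1) hm + conj (y 1) * hx0 + conj (z (n+1+1)) * hy)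
        have hy2 : y (n+1+1) ≠ 0 := by
          intro hy0
          exact (mul_ne_zero hx hz2)
            (by linear_combination -hE (n+1) hm + conj (x 1) * hy0 + z 1 * hy)
        exact ⟨hx2, hy2, hz2⟩
      · exact Or.inl ⟨hx, hy, hz⟩
    · by_cases hx : x (n+1) = 0
      · right
        have hxc : conj (x (n+1)) = 0 := by rw [hx]; simp
        have hz2 : z (n+1+1) ≠ 0 := by
          intro hz0
          exact (mul_ne_zero hy1 hz)
            (by linear_combination hD (n+1) hm - y (n+1+1) * hxc + x 1 * hz0)
        have hy2 : y (n+1+1) ≠ 0 := by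
          intro hy0
          exact (mul_ne_zero hy hz1)
            (by linear_combination hE (n+1) hm - conj (x 1) * hy0 + z (n+1+1) * hx)
        have hx2 : x (n+1+1) ≠ 0 := by
          intro hx0
          exact (mul_ne_zero hy2 (conj_ne _ hz))
            (by linear_combination hA (n+1) hm - y 1 * hx + z 1 * hx0)
        exact ⟨hx2, hy2, hz2⟩
      · exact Or.inl ⟨hx, hy, hz⟩
  have hgood : ∀ N : ℤ, 1 ≤ N → ∃ m : ℤ, N ≤ m ∧ 1 ≤ m ∧ x m ≠ 0 ∧ y m ≠ 0 ∧ z m ≠ 0 := by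
    refine Int.le_induction ⟨1, le_refl _, le_refl _, hx1ne, hy1, hz1⟩ ?_
    intro N hN ih
    · obtain ⟨m, hm, hm1, hxm, hym, hzm⟩ := ih
      by_cases hcase : N + 1 ≤ m
      · exact ⟨m, hcase, hm1, hxm, hym, hzm⟩
      · rcases hstep m hm1 hxm hym hzm with ⟨h1, h2, h3⟩ | ⟨h1, h2, h3⟩
        · exact ⟨m+1, by omega, by omega, h1, h2, h3⟩
        · exact ⟨m+1+1, by omega, by omega, h1, h2, h3⟩
  have hxnsq : normSq (x 1) = 1 := by
    rw [← Complex.sq_norm, hx1]; norm_num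
  have habs : Filter.Tendsto
      (fun k : ℕ => ‖x (k + 1)‖ + ‖y (k + 1)‖ + ‖z (k + 1)‖)
      Filter.atTop (nhds 0) := hsum.tendsto_atTop_zero
  have key : ∀ ε : ℝ, 0 < ε →
      |normSq (x 1) - normSq (z 1)| ≤ ε ∧ |normSq (z 1) - normSq (y 1)| ≤ ε := by
    intro ε hε
    have hδpos : 0 < min 1 (ε/2) := lt_min one_pos (by linarith)
    obtain ⟨N, hN⟩ := (Metric.tendsto_atTop.mp habs) (min 1 (ε/2)) hδpos
    obtain ⟨m, hmN, hm1, hxm, hym, hzm⟩ := hgood ((N:ℤ)+1) (by omega)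
    have hkm : (((m - 1).toNat : ℤ)) + 1 = m := by omega
    have hkN : N ≤ (m-1).toNat := by omega
    have hb := hN _ hkN
    rw [Real.dist_eq, sub_zero] at hb
    have hb2 := lt_of_abs_lt hb
    rw [hkm] at hb2
    have hδ1 : min 1 (ε/2) ≤ 1 := min_le_left _ _
    have hδ2 : min 1 (ε/2) ≤ ε/2 := min_le_right _ _
    have hxb : ‖x m‖ < min 1 (ε/2) := by
      have := norm_nonneg (y m); have := norm_nonneg (z m); linarith
    have hyb : ‖y m‖ < min 1 (ε/2) := by
      have := norm_nonneg (x m); have := norm_nonneg (z m); linarith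
    have hzb : ‖z m‖ < min 1 (ε/2) := by
      have := norm_nonneg (x m); have := norm_nonneg (y m); linarith
    have hxq : normSq (x m) ≤ ε/2 := by
      rw [← Complex.sq_norm]
      have h0 := norm_nonneg (x m)
      nlinarith
    have hyq : normSq (y m) ≤ ε/2 := by
      rw [← Complex.sq_norm]
      have h0 := norm_nonneg (y m)
      nlinarith
    have hzq : normSq (z m) ≤ ε/2 := by
      rw [← Complex.sq_norm]
      have h0 := norm_nonneg (z m)
      nlinarith
    obtain ⟨d1, d2⟩ := hdiffs m hm1 hxm hym hzm
    have hnx := normSq_nonneg (x m)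
    have hny := normSq_nonneg (y m)
    have hnz := normSq_nonneg (z m)
    constructor
    · rw [← d1, abs_le]; constructor <;> linarith
    · rw [← d2, abs_le]; constructor <;> linarith
  have habs_eq_zero : ∀ d : ℝ, (∀ ε : ℝ, 0 < ε → |d| ≤ ε) → d = 0 := by
    intro d hd
    by_contra h
    have h1 := hd (|d|/2) (by positivity)
    have h2 : 0 < |d| := abs_pos.mpr h
    linarith
  have hz1sq : normSq (z 1) = 1 := by
    have h := habs_eq_zero _ (fun ε hε => (key ε hε).1)
    linarith
  have hy1sq : normSq (y 1) = 1 := by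
    have h := habs_eq_zero _ (fun ε hε => (key ε hε).2)
    linarith
  have Ux : x 1 * conj (x 1) = 1 := by rw [Complex.mul_conj, hxnsq]; norm_num
  have Uy : y 1 * conj (y 1) = 1 := by rw [Complex.mul_conj, hy1sq]; norm_num
  have Uz : z 1 * conj (z 1) = 1 := by rw [Complex.mul_conj, hz1sq]; norm_num
  have hall : ∀ n : ℤ, 1 ≤ n → x n ≠ 0 ∧ y n ≠ 0 ∧ z n ≠ 0 := by
    refine Int.le_induction ⟨hx1ne, hy1, hz1⟩ ?_
    intro n hn ih
    obtain ⟨hxn, hyn, hzn⟩ := ih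
    by_cases hx : x (n+1) = 0
    · exfalso
      have hxc : conj (x (n+1)) = 0 := by rw [hx]; simp
      have e2 : x 1 * z (n+1) = y 1 * z n := by
        linear_combination x 1 * y 1 * hCc n hn - x 1 * y 1 * y n * hxc + y 1 * z n * Ux -
          x 1 * z (n+1) * Uy
      have e3 : conj (x n) * y (n+1) = 0 := by linear_combination hD n hn + e2
      have hy0 : y (n+1) = 0 := by
        rcases mul_eq_zero.mp e3 with h | h
        · exact absurd h (conj_ne _ hxn)
        · exact h
      exact (mul_ne_zero hxn hy1)
        (by linear_combination hA n hn + z 1 * hx - conj (z n) * hy0)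
    by_cases hy : y (n+1) = 0
    · exfalso
      have e4 : x n * conj (z 1) = x (n+1) * conj (y 1) := by
        linear_combination conj (y 1) * conj (z 1) * hA n hn -
          conj (y 1) * conj (z 1) * conj (z n) * hy - x n * conj (z 1) * Uy +
          x (n+1) * conj (y 1) * Uz
      have e5 : y n * conj (z (n+1)) = 0 := by linear_combination hF n hn + e4
      have e6 : x n * z (n+1) = y n * z 1 := by
        linear_combination -hE n hn + conj (x 1) * hy
      rcases mul_eq_zero.mp e5 with h | h
      · exact hyn h
      · have hz0 : z (n+1) = 0 := by simpa using congrArg conj h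
        rw [hz0, mul_zero] at e6
        rcases mul_eq_zero.mp e6.symm with h' | h'
        exacts [hyn h', hz1 h']
    by_cases hz : z (n+1) = 0
    · exfalso
      have hzc : conj (z (n+1)) = 0 := by rw [hz]; simp
      have e7 : x (n+1) * z 1 = x n * y 1 := by
        linear_combination y 1 * z 1 * hF n hn - y 1 * z 1 * y n * hzc -
          x (n+1) * z 1 * Uy + x n * y 1 * Uz
      have e8 : y (n+1) * conj (z n) = 0 := by linear_combination hA n hn + e7
      have e9 : conj (x n) * y (n+1) = -(y 1 * z n) := by
        linear_combination hD n hn + x 1 * hz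
      rcases mul_eq_zero.mp e8 with h | h
      · exact (mul_ne_zero hy1 hzn) (by linear_combination e9 - conj (x n) * h)
      · exact (conj_ne _ hzn) h
    exact ⟨hx, hy, hz⟩
  intro n hn
  obtain ⟨hxn, hyn, hzn⟩ := hall n hn
  obtain ⟨d1, d2⟩ := hdiffs n hn hxn hyn hzn
  have hxz : normSq (x n) = normSq (z n) := by
    rw [hxnsq, hz1sq] at d1; linarith
  have hzy : normSq (z n) = normSq (y n) := by
    rw [hz1sq, hy1sq] at d2; linarith
  refine ⟨?_, ?_, ?_⟩
  · rw [Complex.norm_def, Complex.norm_def, hxz, hzy]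
  · rw [Complex.norm_def, Complex.norm_def, ← hzy]
  · exact norm_pos_iff.mpr hxn
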